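/- arXiv:2104.13181 — 2 statements merged into one kernel-verified Lean document; each statement's English description precedes it below -/
import Mathlib

section
/- Let d ≥ 1 and let (gₙ), (kₙ), (aₙ), (lₙ) be sequences of real d×d matrices such that for every n: gₙ = kₙ·aₙ·lₙ, the matrices kₙ and lₙ are orthogonal, and aₙ is diagonal with nonincreasing nonnegative diagonal entries aₙ(0,0) ≥ aₙ(1,1) ≥ … ≥ aₙ(d−1,d−1) ≥ 0 and aₙ ≠ 0. Assume that gₙ/‖gₙ‖ converges to a matrix π of rank one, and let v be a unit vector spanning the column space (range) of π. Then: (i) aₙ/‖aₙ‖ converges to the matrix E₀₀ whose (0,0) entry is 1 and all other entries are 0; (ii) |⟨kₙ·e₀, v⟩| → 1 as n → ∞, where e₀ is the first standard basis vector of ℝᵈ and ⟨·,·⟩ is the standard inner product. -/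
open Filter Topology Matrix

/-- The Frobenius norm of a real square matrix. -/
noncomputable def frobNorm {d : ℕ} (M : Matrix (Fin d) (Fin d) ℝ) : ℝ :=
  Real.sqrt (∑ i, ∑ j, (M i j) ^ 2)

namespace FrobAux

variable {d : ℕ}

/-- Squared Frobenius norm. -/
noncomputable def frobSq (M : Matrix (Fin d) (Fin d) ℝ) : ℝ := ∑ i, ∑ j, (M i j) ^ 2

lemma frobNorm_eq (M : Matrix (Fin d) (Fin d) ℝ) : frobNorm M = Real.sqrt (frobSq M) := rfl

lemma frobSq_nonneg (M : Matrix (Fin d) (Fin d) ℝ) : 0 ≤ frobSq M :=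
  Finset.sum_nonneg fun _ _ => Finset.sum_nonneg fun _ _ => sq_nonneg _

lemma entry_sq_le (M : Matrix (Fin d) (Fin d) ℝ) (i j : Fin d) : (M i j) ^ 2 ≤ frobSq M := by
  have h1 : (M i j) ^ 2 ≤ ∑ j', (M i j') ^ 2 :=
    Finset.single_le_sum (f := fun j' => (M i j') ^ 2) (fun j' _ => sq_nonneg _)
      (Finset.mem_univ j)
  refine h1.trans ?_
  unfold frobSq
  exact Finset.single_le_sum (f := fun i' => ∑ j', (M i' j') ^ 2)
    (fun i' _ => Finset.sum_nonneg fun j' _ => sq_nonneg _) (Finset.mem_univ i)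

lemma frobSq_pos {M : Matrix (Fin d) (Fin d) ℝ} (h : M ≠ 0) : 0 < frobSq M := by
  rcases (frobSq_nonneg M).lt_or_eq with h' | h'
  · exact h'
  · exfalso
    apply h
    ext i j
    have h2 : (M i j) ^ 2 ≤ 0 := h' ▸ entry_sq_le M i j
    have h3 : (M i j) ^ 2 = 0 := le_antisymm h2 (sq_nonneg _)
    simpa using (pow_eq_zero_iff two_ne_zero).mp h3

lemma frobSq_eq_trace (M : Matrix (Fin d) (Fin d) ℝ) : frobSq M = (Mᵀ * M).trace := by
  unfold frobSq
  simp only [Matrix.trace, Matrix.diag_apply, Matrix.mul_apply, Matrix.transpose_apply, sq]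
  exact Finset.sum_comm

lemma frobSq_mul_orth {k l : Matrix (Fin d) (Fin d) ℝ} (hk : kᵀ * k = 1) (hl : lᵀ * l = 1)
    (A : Matrix (Fin d) (Fin d) ℝ) : frobSq (k * A * l) = frobSq A := by
  have hll : l * lᵀ = 1 := mul_eq_one_comm.mp hl
  rw [frobSq_eq_trace, frobSq_eq_trace]
  have h1 : (k * A * l)ᵀ * (k * A * l) = lᵀ * ((Aᵀ * A) * l) := by
    rw [Matrix.transpose_mul, Matrix.transpose_mul]
    simp only [Matrix.mul_assoc]
    rw [← Matrix.mul_assoc kᵀ k, hk, Matrix.one_mul]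
  rw [h1, Matrix.trace_mul_comm, Matrix.mul_assoc, hll, Matrix.mul_one]

lemma frobSq_smul (c : ℝ) (M : Matrix (Fin d) (Fin d) ℝ) : frobSq (c • M) = c ^ 2 * frobSq M := by
  simp [frobSq, Finset.mul_sum, mul_pow]

lemma frobSq_normalize {M : Matrix (Fin d) (Fin d) ℝ} (h : 0 < frobSq M) :
    frobSq ((frobNorm M)⁻¹ • M) = 1 := by
  rw [frobSq_smul, frobNorm_eq, inv_pow, Real.sq_sqrt (frobSq_nonneg M),
    inv_mul_cancel₀ h.ne']

lemma continuous_frobSq : Continuous (frobSq (d := d)) := by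
  unfold frobSq
  exact continuous_finset_sum _ fun i _ => continuous_finset_sum _ fun j _ =>
    ((continuous_apply j).comp (continuous_apply i)).pow 2

lemma frobSq_sub (X Y : Matrix (Fin d) (Fin d) ℝ) :
    frobSq (X - Y) = frobSq X - 2 * (∑ i, ∑ j, X i j * Y i j) + frobSq Y := by
  unfold frobSq
  simp only [Matrix.sub_apply, Finset.mul_sum]
  rw [← Finset.sum_sub_distrib, ← Finset.sum_add_distrib]
  refine Finset.sum_congr rfl fun i _ => ?_
  rw [← Finset.sum_sub_distrib, ← Finset.sum_add_distrib]
  exact Finset.sum_congr rfl fun j _ => by ring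

end FrobAux

open FrobAux

/-- Deterministic core of Lemmas 2.2 and 2.10: if `gₙ = kₙ aₙ lₙ` are Cartan (singular value)
decompositions and `gₙ/‖gₙ‖` converges to a rank-one matrix `π` whose range is spanned by the
unit vector `v`, then `aₙ/‖aₙ‖ → E₀₀` and `|⟨kₙ e₀, v⟩| → 1`. -/
theorem stmt3 {d : ℕ} (hd : 1 ≤ d)
    (g k a l : ℕ → Matrix (Fin d) (Fin d) ℝ)
    (hdec : ∀ n, g n = k n * a n * l n)
    (hk : ∀ n, (k n)ᵀ * k n = 1) (hl : ∀ n, (l n)ᵀ * l n = 1)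
    (hdiag : ∀ n, (a n).IsDiag)
    (hmono : ∀ n, ∀ i j : Fin d, i ≤ j → a n j j ≤ a n i i)
    (hpos : ∀ n, ∀ i : Fin d, 0 ≤ a n i i)
    (hne : ∀ n, a n ≠ 0)
    (π : Matrix (Fin d) (Fin d) ℝ) (hrank : π.rank = 1)
    (hlim : Tendsto (fun n => (frobNorm (g n))⁻¹ • g n) atTop (𝓝 π))
    (v : Fin d → ℝ) (hv : v ⬝ᵥ v = 1)
    (hspan : LinearMap.range π.mulVecLin = Submodule.span ℝ {v}) :
    Tendsto (fun n => (frobNorm (a n))⁻¹ • a n) atTop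
        (𝓝 (Matrix.single (⟨0, hd⟩ : Fin d) (⟨0, hd⟩ : Fin d) (1 : ℝ))) ∧
      Tendsto (fun n => |∑ i, k n i (⟨0, hd⟩ : Fin d) * v i|) atTop (𝓝 1) := by
  set z0 : Fin d := ⟨0, hd⟩ with hz0def
  have hz0le : ∀ i : Fin d, z0 ≤ i := fun i => by
    simp only [Fin.le_def, hz0def]
    exact Nat.zero_le _
  -- basic facts about kₙ, lₙ
  have hkk : ∀ n, k n * (k n)ᵀ = 1 := fun n => mul_eq_one_comm.mp (hk n)
  have hll : ∀ n, l n * (l n)ᵀ = 1 := fun n => mul_eq_one_comm.mp (hl n)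
  -- the normalized a's
  set b : ℕ → Matrix (Fin d) (Fin d) ℝ := fun n => (frobNorm (a n))⁻¹ • a n with hbdef
  have hga : ∀ n, frobSq (g n) = frobSq (a n) := fun n => by
    rw [hdec n]; exact frobSq_mul_orth (hk n) (hl n) _
  have hQa : ∀ n, 0 < frobSq (a n) := fun n => frobSq_pos (hne n)
  have hfg : ∀ n, frobNorm (g n) = frobNorm (a n) := fun n => by
    rw [frobNorm_eq, frobNorm_eq, hga n]
  have hQb : ∀ n, frobSq (b n) = 1 := fun n => frobSq_normalize (hQa n)
  have hbnn : ∀ n i, 0 ≤ b n i i := fun n i =>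
    mul_nonneg (inv_nonneg.mpr (Real.sqrt_nonneg _)) (hpos n i)
  have hbmono : ∀ n, ∀ i : Fin d, b n i i ≤ b n z0 z0 := fun n i =>
    mul_le_mul_of_nonneg_left (hmono n z0 i (hz0le i))
      (inv_nonneg.mpr (Real.sqrt_nonneg _))
  have hboff : ∀ n, ∀ i j : Fin d, i ≠ j → b n i j = 0 := fun n i j hij => by
    show (frobNorm (a n))⁻¹ • a n i j = 0
    rw [hdiag n hij, smul_zero]
  have hb00le1 : ∀ n, b n z0 z0 ≤ 1 := by
    intro n
    nlinarith [entry_sq_le (b n) z0 z0, hQb n, hbnn n z0]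
  -- frobSq π = 1
  have hQself : ∀ n, frobSq ((frobNorm (g n))⁻¹ • g n) = 1 := fun n =>
    frobSq_normalize (by rw [hga n]; exact hQa n)
  have hQπ : frobSq π = 1 := by
    have h1 : Tendsto (fun n => frobSq ((frobNorm (g n))⁻¹ • g n)) atTop (𝓝 (frobSq π)) :=
      (continuous_frobSq.tendsto π).comp hlim
    rw [funext hQself] at h1
    exact tendsto_nhds_unique h1 tendsto_const_nhds
  -- columns of π are multiples of v
  have hcol : ∀ j : Fin d, ∃ c : ℝ, ∀ i, π i j = c * v i := by
    intro j
    have hmem : π.mulVec (Pi.single j 1) ∈ LinearMap.range π.mulVecLin :=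
      ⟨Pi.single j 1, by simp [Matrix.mulVecLin_apply]⟩
    rw [hspan, Submodule.mem_span_singleton] at hmem
    obtain ⟨c, hc⟩ := hmem
    refine ⟨c, fun i => ?_⟩
    have h2 := congrFun hc i
    simp only [Pi.smul_apply, smul_eq_mul, Matrix.mulVec, dotProduct,
      Pi.single_apply, mul_ite, mul_one, mul_zero, Finset.sum_ite_eq',
      Finset.mem_univ, if_true] at h2
    exact h2.symm
  choose w hw using hcol
  have hv2 : ∑ i, (v i) ^ 2 = 1 := by
    simpa [dotProduct, sq] using hv
  have hw2 : ∑ j, (w j) ^ 2 = 1 := by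
    have h1 : frobSq π = (∑ i, (v i) ^ 2) * (∑ j, (w j) ^ 2) := by
      unfold frobSq
      rw [Finset.sum_mul_sum]
      exact Finset.sum_congr rfl fun i _ => Finset.sum_congr rfl fun j _ => by
        rw [hw j i]; ring
    rw [hQπ, hv2, one_mul] at h1
    exact h1.symm
  -- the vectors u, z and the matrix M
  set u : ℕ → Fin d → ℝ := fun n => (k n)ᵀ *ᵥ v with hudef
  set z : ℕ → Fin d → ℝ := fun n => l n *ᵥ w with hzdef
  set M : ℕ → Matrix (Fin d) (Fin d) ℝ := fun n => (k n)ᵀ * π * (l n)ᵀ with hMdef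
  have huapp : ∀ n i, u n i = ∑ p, k n p i * v p := fun n i => by
    simp [hudef, Matrix.mulVec, dotProduct]
  have hzapp : ∀ n j, z n j = ∑ q, l n j q * w q := fun n j => by
    simp [hzdef, Matrix.mulVec, dotProduct]
  have hMentry : ∀ n (i j : Fin d), M n i j = u n i * z n j := by
    intro n i j
    show ((k n)ᵀ * π * (l n)ᵀ) i j = _
    rw [Matrix.mul_apply]
    have h1 : ∀ q, ((k n)ᵀ * π) i q = u n i * w q := by
      intro q
      rw [Matrix.mul_apply]
      rw [show (∑ p, (k n)ᵀ i p * π p q) = ∑ p, (k n p i * v p) * w q from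
        Finset.sum_congr rfl fun p _ => by
          rw [Matrix.transpose_apply, hw q p]; ring]
      rw [← Finset.sum_mul, ← huapp n i]
    rw [Finset.sum_congr rfl fun q _ => by
      rw [h1 q, Matrix.transpose_apply]]
    rw [show (∑ q, u n i * w q * l n j q) = ∑ q, u n i * (l n j q * w q) from
      Finset.sum_congr rfl fun q _ => by ring]
    rw [← Finset.mul_sum, ← hzapp n j]
  have hu2 : ∀ n, ∑ i, (u n i) ^ 2 = 1 := by
    intro n
    have h1 : u n ⬝ᵥ u n = 1 := by
      show ((k n)ᵀ *ᵥ v) ⬝ᵥ ((k n)ᵀ *ᵥ v) = 1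
      rw [Matrix.dotProduct_mulVec, Matrix.vecMul_transpose, Matrix.mulVec_mulVec,
        hkk n, Matrix.one_mulVec, hv]
    simpa [dotProduct, sq] using h1
  have hz2 : ∀ n, ∑ j, (z n j) ^ 2 = 1 := by
    intro n
    have h1 : z n ⬝ᵥ z n = 1 := by
      show (l n *ᵥ w) ⬝ᵥ (l n *ᵥ w) = 1
      rw [Matrix.dotProduct_mulVec, ← Matrix.mulVec_transpose, Matrix.mulVec_mulVec,
        hl n, Matrix.one_mulVec]
      have : w ⬝ᵥ w = 1 := by simpa [dotProduct, sq] using hw2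
      exact this
    simpa [dotProduct, sq] using h1
  have hQM : ∀ n, frobSq (M n) = 1 := by
    intro n
    have h1 : frobSq (M n) = (∑ i, (u n i) ^ 2) * (∑ j, (z n j) ^ 2) := by
      unfold frobSq
      rw [Finset.sum_mul_sum]
      exact Finset.sum_congr rfl fun i _ => Finset.sum_congr rfl fun j _ => by
        rw [hMentry n i j]; ring
    rw [h1, hu2 n, hz2 n, one_mul]
  -- frobSq (b - M) tends to 0
  have hkey : ∀ n, k n * (b n - M n) * l n = (frobNorm (g n))⁻¹ • g n - π := by
    intro n
    rw [Matrix.mul_sub, Matrix.sub_mul]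
    congr 1
    · show k n * ((frobNorm (a n))⁻¹ • a n) * l n = _
      rw [Matrix.mul_smul, Matrix.smul_mul, hfg n, hdec n]
    · show k n * ((k n)ᵀ * π * (l n)ᵀ) * l n = π
      simp only [← Matrix.mul_assoc]
      rw [hkk n, Matrix.one_mul, Matrix.mul_assoc, hl n, Matrix.mul_one]
  have hbMQ : ∀ n, frobSq (b n - M n) = frobSq ((frobNorm (g n))⁻¹ • g n - π) := by
    intro n
    rw [← hkey n, frobSq_mul_orth (hk n) (hl n)]
  have hεQ : Tendsto (fun n => frobSq (b n - M n)) atTop (𝓝 0) := by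
    have hc : Continuous fun X : Matrix (Fin d) (Fin d) ℝ => frobSq (X - π) :=
      continuous_frobSq.comp (continuous_id.sub continuous_const)
    have h1 := (hc.tendsto π).comp hlim
    have h2 : frobSq (π - π) = 0 := by simp [frobSq]
    rw [h2] at h1
    exact (funext hbMQ : (fun n => frobSq (b n - M n)) = _) ▸ h1
  -- the inner product S
  set S : ℕ → ℝ := fun n => ∑ i, b n i i * M n i i with hSdef
  have hSexp : ∀ n, frobSq (b n - M n) = 2 - 2 * S n := by
    intro n
    rw [frobSq_sub, hQb n, hQM n]
    have h1 : (∑ i, ∑ j, b n i j * M n i j) = S n := by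
      refine Finset.sum_congr rfl fun i _ => ?_
      rw [Finset.sum_eq_single i]
      · intro j _ hji
        rw [hboff n i j (Ne.symm hji), zero_mul]
      · intro h; exact absurd (Finset.mem_univ i) h
    rw [h1]; ring
  have hS : Tendsto S atTop (𝓝 1) := by
    have h1 : S = fun n => 1 - frobSq (b n - M n) / 2 := by
      funext n; have := hSexp n; linarith
    rw [h1]
    have h2 : Tendsto (fun n => (1 : ℝ) - frobSq (b n - M n) / 2) atTop (𝓝 (1 - 0 / 2)) :=
      tendsto_const_nhds.sub (hεQ.div_const 2)
    simpa using h2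
  -- Cauchy–Schwarz bound
  have hCS : ∀ n, ∑ i, |u n i| * |z n i| ≤ 1 := by
    intro n
    have h2 := Finset.sum_mul_sq_le_sq_mul_sq Finset.univ
      (fun i => |u n i|) (fun i => |z n i|)
    simp only [sq_abs] at h2
    rw [hu2 n, hz2 n] at h2
    have h3 : 0 ≤ ∑ i, |u n i| * |z n i| :=
      Finset.sum_nonneg fun i _ => mul_nonneg (abs_nonneg _) (abs_nonneg _)
    nlinarith
  have hS_le : ∀ n, S n ≤ b n z0 z0 := by
    intro n
    calc S n ≤ ∑ i, b n z0 z0 * (|u n i| * |z n i|) := by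
          refine Finset.sum_le_sum fun i _ => ?_
          have h1 : b n i i * M n i i ≤ b n i i * |M n i i| :=
            mul_le_mul_of_nonneg_left (le_abs_self _) (hbnn n i)
          have h2 : b n i i * |M n i i| ≤ b n z0 z0 * |M n i i| :=
            mul_le_mul_of_nonneg_right (hbmono n i) (abs_nonneg _)
          have h3 : |M n i i| = |u n i| * |z n i| := by rw [hMentry n i i, abs_mul]
          rw [h3] at h1 h2
          exact h1.trans h2
      _ = b n z0 z0 * ∑ i, |u n i| * |z n i| := by rw [Finset.mul_sum]
      _ ≤ b n z0 z0 * 1 := mul_le_mul_of_nonneg_left (hCS n) (hbnn n z0)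
      _ = b n z0 z0 := mul_one _
  have hb00 : Tendsto (fun n => b n z0 z0) atTop (𝓝 1) :=
    tendsto_of_tendsto_of_tendsto_of_le_of_le hS tendsto_const_nhds hS_le hb00le1
  -- auxiliary: diagonal entries other than (0,0) tend to 0
  have hup : Tendsto (fun n => Real.sqrt (1 - (b n z0 z0) ^ 2)) atTop (𝓝 0) := by
    have h1 : Tendsto (fun n => 1 - (b n z0 z0) ^ 2) atTop (𝓝 0) := by
      have h2 : Tendsto (fun n => (1 : ℝ) - (b n z0 z0) ^ 2) atTop (𝓝 (1 - 1 ^ 2)) :=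
        tendsto_const_nhds.sub (hb00.pow 2)
      simpa using h2
    have h3 := (Real.continuous_sqrt.tendsto 0).comp h1
    simpa [Function.comp_def] using h3
  constructor
  · -- part (i)
    refine tendsto_pi_nhds.mpr ?_
    intro i
    rw [tendsto_pi_nhds]
    intro j
    by_cases hij : i = j
    · subst hij
      by_cases hi0 : i = z0
      · subst hi0
        have hE : Matrix.single z0 z0 (1 : ℝ) z0 z0 = 1 := by
          simp [Matrix.single]
        rw [hE]
        exact hb00
      · have hE : Matrix.single z0 z0 (1 : ℝ) i i = 0 := by
          simp [Matrix.single]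
          intro h
          exact absurd h.symm hi0
        rw [hE]
        have hbound : ∀ n, b n i i ≤ Real.sqrt (1 - (b n z0 z0) ^ 2) := by
          intro n
          have h1 : ∀ p : Fin d, (b n p p) ^ 2 ≤ ∑ q, (b n p q) ^ 2 :=
            fun p => Finset.single_le_sum (f := fun q => (b n p q) ^ 2)
              (fun q _ => sq_nonneg _) (Finset.mem_univ p)
          have h2 : ∑ p, (b n p p) ^ 2 ≤ frobSq (b n) :=
            Finset.sum_le_sum fun p _ => h1 p
          have h3 : (b n z0 z0) ^ 2 + (b n i i) ^ 2 = ∑ p ∈ ({z0, i} : Finset (Fin d)), (b n p p) ^ 2 := by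
            rw [Finset.sum_pair (fun h => hi0 h.symm)]
          have h4 : ∑ p ∈ ({z0, i} : Finset (Fin d)), (b n p p) ^ 2 ≤ ∑ p, (b n p p) ^ 2 :=
            Finset.sum_le_sum_of_subset_of_nonneg (Finset.subset_univ _)
              (fun p _ _ => sq_nonneg _)
          have h5 : (b n i i) ^ 2 ≤ 1 - (b n z0 z0) ^ 2 := by
            have := hQb n; linarith
          exact (Real.le_sqrt (hbnn n i) (by nlinarith [sq_nonneg (b n z0 z0)])).mpr h5
        exact tendsto_of_tendsto_of_tendsto_of_le_of_le tendsto_const_nhds hup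
          (fun n => hbnn n i) hbound
    · have hE : Matrix.single z0 z0 (1 : ℝ) i j = 0 := by
        simp [Matrix.single]
        intro h1 h2
        exact absurd (h1.symm.trans h2) hij
      rw [hE]
      have : (fun n => ((frobNorm (a n))⁻¹ • a n) i j) = fun _ => (0 : ℝ) :=
        funext fun n => hboff n i j hij
      rw [this]
      exact tendsto_const_nhds
  · -- part (ii)
    have hsqrtε : Tendsto (fun n => Real.sqrt (frobSq (b n - M n))) atTop (𝓝 0) := by
      have h3 := (Real.continuous_sqrt.tendsto 0).comp hεQ
      simpa [Function.comp_def] using h3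
    have hbM00 : Tendsto (fun n => (b n - M n) z0 z0) atTop (𝓝 0) := by
      apply squeeze_zero_norm (fun n => ?_) hsqrtε
      rw [Real.norm_eq_abs]
      exact Real.abs_le_sqrt (entry_sq_le _ z0 z0)
    have hM00 : Tendsto (fun n => M n z0 z0) atTop (𝓝 1) := by
      have h := hb00.sub hbM00
      simp only [Matrix.sub_apply] at h
      simpa [sub_sub_cancel] using h
    have hle1 : ∀ n, |u n z0| ≤ 1 := by
      intro n
      have h1 : (u n z0) ^ 2 ≤ ∑ i, (u n i) ^ 2 :=
        Finset.single_le_sum (f := fun i => (u n i) ^ 2) (fun i _ => sq_nonneg _)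
          (Finset.mem_univ z0)
      rw [hu2 n] at h1
      nlinarith [abs_nonneg (u n z0), sq_abs (u n z0)]
    have hzle1 : ∀ n, |z n z0| ≤ 1 := by
      intro n
      have h1 : (z n z0) ^ 2 ≤ ∑ i, (z n i) ^ 2 :=
        Finset.single_le_sum (f := fun i => (z n i) ^ 2) (fun i _ => sq_nonneg _)
          (Finset.mem_univ z0)
      rw [hz2 n] at h1
      nlinarith [abs_nonneg (z n z0), sq_abs (z n z0)]
    have hge : ∀ n, M n z0 z0 ≤ |u n z0| := by
      intro n
      rw [hMentry n z0 z0]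
      calc u n z0 * z n z0 ≤ |u n z0 * z n z0| := le_abs_self _
        _ = |u n z0| * |z n z0| := abs_mul _ _
        _ ≤ |u n z0| * 1 := mul_le_mul_of_nonneg_left (hzle1 n) (abs_nonneg _)
        _ = |u n z0| := mul_one _
    have hfin : Tendsto (fun n => |u n z0|) atTop (𝓝 1) :=
      tendsto_of_tendsto_of_tendsto_of_le_of_le hM00 tendsto_const_nhds hge hle1
    have heq : (fun n => |∑ i, k n i z0 * v i|) = fun n => |u n z0| := by
      funext n
      rw [huapp n z0]
    rw [heq]
    exact hfin
end

section
/- There exists a constant C > 0 such that for every x ∈ ℝ there exists δ > 0 such that for all s, t ∈ ℝ and all θ ∈ ℝ with |θ| ≤ δ: |s − t| ≤ C·log‖A(−s)·U(x)·R(θ)·A(t)‖ + C, where A(s) is the 2×2 real matrix with rows (e^s, 0) and (0, e^{−s}), U(x) is the 2×2 real matrix with rows (1, x) and (0, 1), R(θ) is the rotation matrix with rows (cos θ, −sin θ) and (sin θ, cos θ), and ‖·‖ denotes the Frobenius norm on 2×2 real matrices. -/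
/-- The Frobenius norm of a real 2×2 matrix. -/
noncomputable def frobNorm2 (M : Matrix (Fin 2) (Fin 2) ℝ) : ℝ :=
  Real.sqrt (∑ i, ∑ j, (M i j) ^ 2)

private lemma frobNorm2_eq (a b c d : ℝ) :
    frobNorm2 !![a, b; c, d] = Real.sqrt (a ^ 2 + b ^ 2 + c ^ 2 + d ^ 2) := by
  simp [frobNorm2, Fin.sum_univ_two]
  ring_nf

private lemma key_lemma (a b c d L : ℝ) (hL : 0 ≤ L) (hdet : a * d - b * c = 1)
    (hsum : (Real.exp L * (1 / 4)) ^ 2 ≤ a ^ 2 + b ^ 2 + c ^ 2 + d ^ 2) :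
    L ≤ 2 * Real.log (frobNorm2 !![a, b; c, d]) + 2 := by
  rw [frobNorm2_eq]
  set S := a ^ 2 + b ^ 2 + c ^ 2 + d ^ 2 with hS
  have h2 : (2:ℝ) ≤ S := by nlinarith [sq_nonneg (a - d), sq_nonneg (b + c)]
  have hone : (1:ℝ) ≤ Real.sqrt S := by
    calc (1:ℝ) = Real.sqrt 1 := by simp
      _ ≤ _ := Real.sqrt_le_sqrt (by linarith)
  have hlog0 : 0 ≤ Real.log (Real.sqrt S) := Real.log_nonneg hone
  have hfb : Real.exp L * (1/4) ≤ Real.sqrt S := by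
    calc Real.exp L * (1/4) = Real.sqrt ((Real.exp L * (1/4))^2) := by
          rw [Real.sqrt_sq (by positivity)]
      _ ≤ _ := Real.sqrt_le_sqrt hsum
  have hlog : L - Real.log 4 ≤ Real.log (Real.sqrt S) := by
    have h := Real.log_le_log (by positivity) hfb
    rw [Real.log_mul (Real.exp_pos _).ne' (by norm_num), Real.log_exp,
      show (1/4 : ℝ) = 4⁻¹ by norm_num, Real.log_inv] at h
    linarith
  have hlog4 : Real.log 4 ≤ 2 := by
    have h42 : Real.log 4 = 2 * Real.log 2 := by
      rw [show (4:ℝ) = 2^2 by norm_num, Real.log_pow]; push_cast; ring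
    have := Real.log_two_lt_d9
    linarith
  linarith

/-- Lemma 2.8 bis for `G = SL₂(ℝ)`: there is `C > 0` such that for every unipotent `U(x)` there
is a neighborhood `|θ| ≤ δ` of the identity rotation with
`|s − t| ≤ C·log‖A(−s)·U(x)·R(θ)·A(t)‖ + C` for all `s, t`. -/
theorem stmt4 :
    ∃ C : ℝ, 0 < C ∧ ∀ x : ℝ, ∃ δ : ℝ, 0 < δ ∧ ∀ s t θ : ℝ, |θ| ≤ δ →
      |s - t| ≤ C * Real.log (frobNorm2
        (!![Real.exp (-s), 0; 0, Real.exp (-(-s))] *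
          !![1, x; 0, 1] *
          !![Real.cos θ, -Real.sin θ; Real.sin θ, Real.cos θ] *
          !![Real.exp t, 0; 0, Real.exp (-t)])) + C := by
  refine ⟨2, by norm_num, fun x => ⟨min 1 (1 / (4 * (1 + |x|))), ?_, ?_⟩⟩
  · have : 0 < 1 + |x| := by positivity
    positivity
  intro s t θ hθ
  have hθ1 : |θ| ≤ 1 := hθ.trans (min_le_left _ _)
  have hθ2 : |θ| ≤ 1 / (4 * (1 + |x|)) := hθ.trans (min_le_right _ _)
  have hcos : (1:ℝ)/2 ≤ Real.cos θ := by
    have := Real.one_sub_sq_div_two_le_cos (x := θ)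
    nlinarith [sq_abs θ, abs_nonneg θ]
  have hxs : |x * Real.sin θ| ≤ 1/4 := by
    have hs : |Real.sin θ| ≤ |θ| := Real.abs_sin_le_abs
    have hx1 : 0 < 1 + |x| := by positivity
    have h5 : |x * Real.sin θ| ≤ |x| * (1 / (4 * (1 + |x|))) := by
      rw [abs_mul]
      exact mul_le_mul_of_nonneg_left (hs.trans hθ2) (abs_nonneg x)
    refine h5.trans ?_
    rw [mul_one_div, div_le_iff₀ (by positivity)]
    nlinarith [abs_nonneg x]
  have hM : (!![Real.exp (-s), 0; 0, Real.exp (-(-s))] *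
          !![1, x; 0, 1] *
          !![Real.cos θ, -Real.sin θ; Real.sin θ, Real.cos θ] *
          !![Real.exp t, 0; 0, Real.exp (-t)]) =
    !![Real.exp (-s) * (Real.cos θ + x * Real.sin θ) * Real.exp t,
       Real.exp (-s) * (x * Real.cos θ - Real.sin θ) * Real.exp (-t);
       Real.exp s * Real.sin θ * Real.exp t,
       Real.exp s * Real.cos θ * Real.exp (-t)] := by
    simp [Matrix.mul_fin_two]
    ring_nf
    exact ⟨trivial, trivial⟩
  rw [hM]
  apply key_lemma _ _ _ _ _ (abs_nonneg _)
  · have e1 : Real.exp (-s) * Real.exp s = 1 := by rw [← Real.exp_add]; simp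
    have e2 : Real.exp t * Real.exp (-t) = 1 := by rw [← Real.exp_add]; simp
    have e3 := Real.sin_sq_add_cos_sq θ
    calc Real.exp (-s) * (Real.cos θ + x * Real.sin θ) * Real.exp t *
          (Real.exp s * Real.cos θ * Real.exp (-t)) -
          Real.exp (-s) * (x * Real.cos θ - Real.sin θ) * Real.exp (-t) *
          (Real.exp s * Real.sin θ * Real.exp t)
        = (Real.exp (-s) * Real.exp s) * (Real.exp t * Real.exp (-t)) *
          (Real.sin θ ^ 2 + Real.cos θ ^ 2) := by ring
      _ = 1 := by rw [e1, e2, e3]; ring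
  · -- sum of squares bound
    have hea : Real.exp (t - s) * (1/4) ≤ |Real.exp (-s) * (Real.cos θ + x * Real.sin θ) * Real.exp t| := by
      have h1 : (1:ℝ)/4 ≤ |Real.cos θ + x * Real.sin θ| := by
        have h := abs_sub_abs_le_abs_sub (Real.cos θ) (-(x * Real.sin θ))
        rw [abs_neg] at h
        simp only [sub_neg_eq_add] at h
        have h2 : Real.cos θ ≤ |Real.cos θ| := le_abs_self _
        linarith
      have h3 : Real.exp (t - s) * (1/4) ≤ Real.exp (t - s) * |Real.cos θ + x * Real.sin θ| :=
        mul_le_mul_of_nonneg_left h1 (Real.exp_pos _).le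
      refine h3.trans (le_of_eq ?_)
      rw [abs_mul, abs_mul, abs_of_pos (Real.exp_pos _), abs_of_pos (Real.exp_pos _),
        show Real.exp (t - s) = Real.exp (-s) * Real.exp t by rw [← Real.exp_add]; ring_nf]
      ring
    have hed : Real.exp (s - t) * (1/2) ≤ |Real.exp s * Real.cos θ * Real.exp (-t)| := by
      have h1 : (1:ℝ)/2 ≤ |Real.cos θ| := hcos.trans (le_abs_self _)
      have h3 : Real.exp (s - t) * (1/2) ≤ Real.exp (s - t) * |Real.cos θ| :=
        mul_le_mul_of_nonneg_left h1 (Real.exp_pos _).le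
      refine h3.trans (le_of_eq ?_)
      rw [abs_mul, abs_mul, abs_of_pos (Real.exp_pos _), abs_of_pos (Real.exp_pos _),
        show Real.exp (s - t) = Real.exp s * Real.exp (-t) by rw [← Real.exp_add]; ring_nf]
      ring
    set a := Real.exp (-s) * (Real.cos θ + x * Real.sin θ) * Real.exp t
    set b := Real.exp (-s) * (x * Real.cos θ - Real.sin θ) * Real.exp (-t)
    set c := Real.exp s * Real.sin θ * Real.exp t
    set d := Real.exp s * Real.cos θ * Real.exp (-t)
    clear_value a b c d
    rcases abs_cases (s - t) with ⟨h1, _⟩ | ⟨h1, _⟩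
    · have hd2 : (Real.exp (s - t) * (1/2))^2 ≤ d^2 := by
        rw [← sq_abs d]; exact pow_le_pow_left₀ (by positivity) hed 2
      rw [h1]
      nlinarith [sq_nonneg a, sq_nonneg b, sq_nonneg c, Real.exp_pos (s - t)]
    · have ha2 : (Real.exp (t - s) * (1/4))^2 ≤ a^2 := by
        rw [← sq_abs a]; exact pow_le_pow_left₀ (by positivity) hea 2
      rw [h1, neg_sub]
      nlinarith [sq_nonneg b, sq_nonneg c, sq_nonneg d]
end
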